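/- arXiv:1411.0936 — 3 statements merged into one kernel-verified Lean document; each statement's English description precedes it below -/
import Mathlib

section
/- Any 2×2 stochastic matrix T_{p,q} = [[1-p, q],[p, 1-q]] with 0 ≤ p, q ≤ 1 and p ≥ q can be represented on diagonal density matrices by a completely dephased unitary followed by a (swapped, if q > p) amplitude damping channel: choosing η = q - p and cos(2θ) = (1-p-q)/(1-|q-p|), the composite map Ξ_η ∘ Φ₁ ∘ U_θ sends diag(m, 1-m) to diag(m', 1-m') where m' = (1-p-q)m + q. -/
open Matrix Real

/-- any 2×2 stochastic matrix `T_{p,q}` with `p ≥ q` is represented on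
diagonal density matrices by a completely dephased unitary followed by the
(swapped) amplitude damping channel with `|η| = p - q`: the composite map sends
`diag(m, 1-m)` to `diag(m', 1-m')` with `m' = (1-p-q)m + q`. -/
theorem stmt_1 (p q m θ : ℝ) (hp0 : 0 ≤ p) (hp1 : p ≤ 1) (hq0 : 0 ≤ q) (hq1 : q ≤ 1)
    (hqp : q ≤ p) (hm0 : 0 ≤ m) (hm1 : m ≤ 1)
    (hθ : Real.cos (2 * θ) = (1 - p - q) / (1 - (p - q))) :
    let U : Matrix (Fin 2) (Fin 2) ℝ := !![Real.cos θ, Real.sin θ; -Real.sin θ, Real.cos θ]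
    let ρ : Matrix (Fin 2) (Fin 2) ℝ := !![m, 0; 0, 1 - m]
    -- complete dephasing of U ρ U†
    let D : Matrix (Fin 2) (Fin 2) ℝ := !![(U * ρ * Uᵀ) 0 0, 0; 0, (U * ρ * Uᵀ) 1 1]
    -- swapped amplitude damping channel with strength |η| = p - q
    let L0 : Matrix (Fin 2) (Fin 2) ℝ := !![Real.sqrt (1 - (p - q)), 0; 0, 1]
    let L1 : Matrix (Fin 2) (Fin 2) ℝ := !![0, 0; Real.sqrt (p - q), 0]
    L0 * D * L0ᵀ + L1 * D * L1ᵀ =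
      !![(1 - p - q) * m + q, 0; 0, 1 - ((1 - p - q) * m + q)] := by
  intro U ρ D L0 L1
  have h1 : Real.sqrt (1-(p-q)) * Real.sqrt (1-(p-q)) = 1-(p-q) :=
    Real.mul_self_sqrt (by linarith)
  have h2 : Real.sqrt (p-q) * Real.sqrt (p-q) = p - q :=
    Real.mul_self_sqrt (by linarith)
  have hc : Real.cos θ * Real.cos θ + Real.sin θ * Real.sin θ = 1 := by
    have := Real.sin_sq_add_cos_sq θ; nlinarith [this]
  have hcos2 : Real.cos (2*θ) = 2 * (Real.cos θ * Real.cos θ) - 1 := by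
    have := Real.cos_two_mul θ; nlinarith [this]
  have key : Real.cos (2*θ) * (1 - (p-q)) = 1 - p - q ∨ (p = 1 ∧ q = 0) := by
    by_cases h : (1:ℝ) - (p - q) = 0
    · right; constructor <;> linarith
    · left; rw [hθ]; field_simp
  ext i j
  fin_cases i <;> fin_cases j <;>
    simp [U, ρ, D, L0, L1, Matrix.mul_apply, Fin.sum_univ_succ, Matrix.transpose_apply,
          Matrix.vecHead, Matrix.vecTail, Matrix.cons_val_zero, Matrix.cons_val_one,
          Matrix.head_cons, Matrix.vecMul, dotProduct]
  · rcases key with hk | ⟨hp, hq⟩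
    · linear_combination (Real.cos θ*m*Real.cos θ + Real.sin θ*(1-m)*Real.sin θ) * h1 +
        (1-(p-q))*(1-m) * hc + (2*m-1)/2 * hk - (1-(p-q))*(2*m-1)/2 * hcos2
    · subst hp; subst hq; norm_num
  · rcases key with hk | ⟨hp, hq⟩
    · linear_combination (Real.cos θ*m*Real.cos θ + Real.sin θ*(1-m)*Real.sin θ) * h2 +
        (m+(p-q)*(1-m)) * hc - (2*m-1)/2 * hk + (1-(p-q))*(2*m-1)/2 * hcos2
    · subst hp; subst hq; norm_num; linear_combination hc
end

section
/- The three local Kraus operators K₀ = √((1-ξ/2)/(1-η)) [[√(1-η)√(1-p), √(1-η)√q e^{iφ₂}],[√q e^{iφ₁}, -√(1-p) e^{i(φ₁+φ₂)}]], K₁ = √((ξ/2)/(1-η)) [[√(1-η)√(1-p), √(1-η)√q e^{iφ₂}],[-√q e^{iφ₁}, √(1-p) e^{i(φ₁+φ₂)}]], and K₂ = √(η/(1-η)) [[0, 0],[√(1-p), √q e^{iφ₂}]] satisfy K₀†K₀ + K₁†K₁ + K₂†K₂ = I, given 0 ≤ ξ ≤ 2, 0 ≤ η < 1, and (1-p)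 + q = 1 - η. -/
open Matrix

/-- the three local Kraus operators K₀, K₁, K₂ of the noisy QCA
satisfy the trace-preservation condition `K₀†K₀ + K₁†K₁ + K₂†K₂ = I`,
given `0 ≤ ξ ≤ 2`, `0 ≤ η < 1` and `(1-p) + q = 1 - η`. -/
theorem stmt_6 (p q η ξ φ₁ φ₂ : ℝ) (hp0 : 0 ≤ p) (hp1 : p ≤ 1) (hq0 : 0 ≤ q) (hq1 : q ≤ 1)
    (hξ0 : 0 ≤ ξ) (hξ2 : ξ ≤ 2) (hη0 : 0 ≤ η) (hη1 : η < 1)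
    (hcons : (1 - p) + q = 1 - η) :
    let K0 : Matrix (Fin 2) (Fin 2) ℂ :=
      (Real.sqrt ((1 - ξ / 2) / (1 - η)) : ℂ) •
        !![(Real.sqrt (1 - η) : ℂ) * (Real.sqrt (1 - p) : ℂ),
           (Real.sqrt (1 - η) : ℂ) * (Real.sqrt q : ℂ) * Complex.exp (Complex.I * φ₂);
           (Real.sqrt q : ℂ) * Complex.exp (Complex.I * φ₁),
           -(Real.sqrt (1 - p) : ℂ) * Complex.exp (Complex.I * (φ₁ + φ₂))]
    let K1 : Matrix (Fin 2) (Fin 2) ℂ :=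
      (Real.sqrt ((ξ / 2) / (1 - η)) : ℂ) •
        !![(Real.sqrt (1 - η) : ℂ) * (Real.sqrt (1 - p) : ℂ),
           (Real.sqrt (1 - η) : ℂ) * (Real.sqrt q : ℂ) * Complex.exp (Complex.I * φ₂);
           -(Real.sqrt q : ℂ) * Complex.exp (Complex.I * φ₁),
           (Real.sqrt (1 - p) : ℂ) * Complex.exp (Complex.I * (φ₁ + φ₂))]
    let K2 : Matrix (Fin 2) (Fin 2) ℂ :=
      (Real.sqrt (η / (1 - η)) : ℂ) •
        !![0, 0; (Real.sqrt (1 - p) : ℂ), (Real.sqrt q : ℂ) * Complex.exp (Complex.I * φ₂)]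
    K0ᴴ * K0 + K1ᴴ * K1 + K2ᴴ * K2 = 1 := by
  intro K0 K1 K2
  have h1η : (0:ℝ) < 1 - η := by linarith
  have ha : (Real.sqrt ((1 - ξ/2)/(1-η)) : ℂ) * (Real.sqrt ((1 - ξ/2)/(1-η)) : ℂ) = (((1 - ξ/2)/(1-η) : ℝ) : ℂ) := by
    rw [← Complex.ofReal_mul, Real.mul_self_sqrt (div_nonneg (by linarith) (by linarith))]
  have hb : (Real.sqrt ((ξ/2)/(1-η)) : ℂ) * (Real.sqrt ((ξ/2)/(1-η)) : ℂ) = (((ξ/2)/(1-η) : ℝ) : ℂ) := by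
    rw [← Complex.ofReal_mul, Real.mul_self_sqrt (div_nonneg (by linarith) (by linarith))]
  have hc : (Real.sqrt (η/(1-η)) : ℂ) * (Real.sqrt (η/(1-η)) : ℂ) = ((η/(1-η) : ℝ) : ℂ) := by
    rw [← Complex.ofReal_mul, Real.mul_self_sqrt (div_nonneg (by linarith) (by linarith))]
  have hS : (Real.sqrt (1-η) : ℂ) * (Real.sqrt (1-η) : ℂ) = ((1-η:ℝ):ℂ) := by
    rw [← Complex.ofReal_mul, Real.mul_self_sqrt (by linarith)]
  have hA : (Real.sqrt (1-p) : ℂ) * (Real.sqrt (1-p) : ℂ) = ((1-p : ℝ) : ℂ) := by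
    rw [← Complex.ofReal_mul, Real.mul_self_sqrt (by linarith)]
  have hB : (Real.sqrt q : ℂ) * (Real.sqrt q : ℂ) = ((q : ℝ) : ℂ) := by
    rw [← Complex.ofReal_mul, Real.mul_self_sqrt hq0]
  have hE1 : (starRingEnd ℂ) (Complex.exp (Complex.I * (φ₁:ℂ))) * Complex.exp (Complex.I * (φ₁:ℂ)) = 1 := by
    rw [← Complex.exp_conj, ← Complex.exp_add]
    simp [Complex.conj_ofReal]
  have hE2 : (starRingEnd ℂ) (Complex.exp (Complex.I * (φ₂:ℂ))) * Complex.exp (Complex.I * (φ₂:ℂ)) = 1 := by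
    rw [← Complex.exp_conj, ← Complex.exp_add]
    simp [Complex.conj_ofReal]
  have hF1G : (starRingEnd ℂ) (Complex.exp (Complex.I * (φ₁:ℂ))) *
      Complex.exp (Complex.I * ((φ₁:ℂ) + (φ₂:ℂ))) = Complex.exp (Complex.I * (φ₂:ℂ)) := by
    rw [← Complex.exp_conj, ← Complex.exp_add]
    congr 1
    simp [Complex.conj_ofReal]
    ring
  have hGF1 : (starRingEnd ℂ) (Complex.exp (Complex.I * ((φ₁:ℂ) + (φ₂:ℂ)))) *
      Complex.exp (Complex.I * (φ₁:ℂ)) = (starRingEnd ℂ) (Complex.exp (Complex.I * (φ₂:ℂ))) := by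
    rw [← Complex.exp_conj, ← Complex.exp_conj, ← Complex.exp_add]
    congr 1
    simp [Complex.conj_ofReal]
    ring
  have hGG : (starRingEnd ℂ) (Complex.exp (Complex.I * ((φ₁:ℂ) + (φ₂:ℂ)))) *
      Complex.exp (Complex.I * ((φ₁:ℂ) + (φ₂:ℂ))) = 1 := by
    rw [← Complex.exp_conj, ← Complex.exp_add]
    simp [Complex.conj_ofReal]
  have hd00 : ((((1 - ξ/2)/(1-η) : ℝ) : ℂ) + (((ξ/2)/(1-η) : ℝ) : ℂ)) * (((1-η:ℝ):ℂ) * ((1-p:ℝ):ℂ) + ((q:ℝ):ℂ))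
      + ((η/(1-η) : ℝ) : ℂ) * ((1-p:ℝ):ℂ) = 1 := by
    have hp' : 1 - p = 1 - η - q := by linarith
    have h : ((1 - ξ/2)/(1-η) + (ξ/2)/(1-η)) * ((1-η)*(1-η-q) + q) + (η/(1-η))*(1-η-q) = 1 := by
      field_simp
      ring
    rw [← hp'] at h
    exact_mod_cast congrArg (fun x : ℝ => (x:ℂ)) h
  have hd11 : ((((1 - ξ/2)/(1-η) : ℝ) : ℂ) + (((ξ/2)/(1-η) : ℝ) : ℂ)) * (((1-η:ℝ):ℂ) * ((q:ℝ):ℂ) + ((1-p:ℝ):ℂ))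
      + ((η/(1-η) : ℝ) : ℂ) * ((q:ℝ):ℂ) = 1 := by
    have hp' : 1 - p = 1 - η - q := by linarith
    have h : ((1 - ξ/2)/(1-η) + (ξ/2)/(1-η)) * ((1-η)*q + (1-η-q)) + (η/(1-η))*q = 1 := by
      field_simp
      ring
    rw [← hp'] at h
    exact_mod_cast congrArg (fun x : ℝ => (x:ℂ)) h
  have hoff : ((η:ℝ):ℂ) * ((((1 - ξ/2)/(1-η) : ℝ) : ℂ) + (((ξ/2)/(1-η) : ℝ) : ℂ)) = ((η/(1-η) : ℝ) : ℂ) := by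
    have h : η * ((1 - ξ/2)/(1-η) + (ξ/2)/(1-η)) = η/(1-η) := by
      field_simp
      ring
    exact_mod_cast congrArg (fun x : ℝ => (x:ℂ)) h
  ext i j
  fin_cases i <;> fin_cases j <;>
    simp only [K0, K1, K2, Matrix.add_apply, Matrix.mul_apply, Fin.sum_univ_two,
      Matrix.conjTranspose_apply, Matrix.smul_apply, Matrix.cons_val', Matrix.cons_val_zero,
      Matrix.cons_val_one, Matrix.head_cons, Matrix.head_fin_const, Matrix.empty_val',
      Matrix.cons_val_fin_one, Matrix.one_apply, smul_eq_mul, star_mul', star_neg,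
      Complex.star_def, Complex.conj_ofReal, _root_.map_mul, map_neg, neg_mul, mul_neg, neg_neg, reduceIte, if_true, if_false, ne_eq,
      Fin.mk_one, Fin.zero_eta, Matrix.one_apply_eq, mul_zero, zero_mul, add_zero,
      Matrix.one_apply_ne, Fin.ext_iff, Fin.val_zero, Fin.val_one, Matrix.cons_val_zero,
      Matrix.of_apply, Matrix.cons_val_one]
  · -- (0,0)
    linear_combination (norm := (push_cast; ring1)) ((Real.sqrt ((1 - ξ/2)/(1-η)) : ℂ)*(Real.sqrt ((1 - ξ/2)/(1-η)) : ℂ)*(Real.sqrt q : ℂ)*(Real.sqrt q : ℂ) + (Real.sqrt ((ξ/2)/(1-η)) : ℂ)*(Real.sqrt ((ξ/2)/(1-η)) : ℂ)*(Real.sqrt q : ℂ)*(Real.sqrt q : ℂ)) * hE1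
      + ((Real.sqrt (1-η) : ℂ)*(Real.sqrt (1-η) : ℂ)*(Real.sqrt (1-p) : ℂ)*(Real.sqrt (1-p) : ℂ) + (Real.sqrt q : ℂ)*(Real.sqrt q : ℂ)) * (ha + hb) + ((Real.sqrt (1-p) : ℂ)*(Real.sqrt (1-p) : ℂ)) * hc
      + ((((1 - ξ/2)/(1-η) : ℝ) : ℂ)+(((ξ/2)/(1-η) : ℝ) : ℂ))*(Real.sqrt (1-p) : ℂ)*(Real.sqrt (1-p) : ℂ)*hS + (((((1 - ξ/2)/(1-η) : ℝ) : ℂ)+(((ξ/2)/(1-η) : ℝ) : ℂ))*((1-η:ℝ):ℂ) + ((η/(1-η) : ℝ) : ℂ))*hA + ((((1 - ξ/2)/(1-η) : ℝ) : ℂ)+(((ξ/2)/(1-η) : ℝ) : ℂ))*hB + hd00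
  · -- (0,1)
    linear_combination (norm := (push_cast; ring1)) (-((Real.sqrt ((1 - ξ/2)/(1-η)) : ℂ)*(Real.sqrt ((1 - ξ/2)/(1-η)) : ℂ) + (Real.sqrt ((ξ/2)/(1-η)) : ℂ)*(Real.sqrt ((ξ/2)/(1-η)) : ℂ))*(Real.sqrt (1-p) : ℂ)*(Real.sqrt q : ℂ)) * hF1G + (((Real.sqrt ((1 - ξ/2)/(1-η)) : ℂ)*(Real.sqrt ((1 - ξ/2)/(1-η)) : ℂ)+(Real.sqrt ((ξ/2)/(1-η)) : ℂ)*(Real.sqrt ((ξ/2)/(1-η)) : ℂ))*(Real.sqrt (1-p) : ℂ)*(Real.sqrt q : ℂ)*Complex.exp (Complex.I * (φ₂:ℂ))) * hS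
      + (((Real.sqrt (1-η) : ℂ)*(Real.sqrt (1-η) : ℂ) - 1)*(Real.sqrt (1-p) : ℂ)*(Real.sqrt q : ℂ)*Complex.exp (Complex.I * (φ₂:ℂ))) * (ha + hb) + ((Real.sqrt (1-p) : ℂ)*(Real.sqrt q : ℂ)*Complex.exp (Complex.I * (φ₂:ℂ))) * hc + (-((Real.sqrt (1-p) : ℂ)*(Real.sqrt q : ℂ)*Complex.exp (Complex.I * (φ₂:ℂ)))) * hoff
      + ((-((Real.sqrt ((1 - ξ/2)/(1-η)) : ℂ)*(Real.sqrt ((1 - ξ/2)/(1-η)) : ℂ)) - (Real.sqrt ((ξ/2)/(1-η)) : ℂ)*(Real.sqrt ((ξ/2)/(1-η)) : ℂ) + (((1-η)⁻¹ : ℝ) : ℂ))*(Real.sqrt (1-p) : ℂ)*(Real.sqrt q : ℂ)*Complex.exp (Complex.I * (φ₂:ℂ))) * hS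
  · -- (1,0)
    linear_combination (norm := (push_cast; ring1)) (-((Real.sqrt ((1 - ξ/2)/(1-η)) : ℂ)*(Real.sqrt ((1 - ξ/2)/(1-η)) : ℂ) + (Real.sqrt ((ξ/2)/(1-η)) : ℂ)*(Real.sqrt ((ξ/2)/(1-η)) : ℂ))*(Real.sqrt (1-p) : ℂ)*(Real.sqrt q : ℂ)) * hGF1 + (((Real.sqrt ((1 - ξ/2)/(1-η)) : ℂ)*(Real.sqrt ((1 - ξ/2)/(1-η)) : ℂ)+(Real.sqrt ((ξ/2)/(1-η)) : ℂ)*(Real.sqrt ((ξ/2)/(1-η)) : ℂ))*(Real.sqrt (1-p) : ℂ)*(Real.sqrt q : ℂ)*(starRingEnd ℂ) (Complex.exp (Complex.I * (φ₂:ℂ)))) * hS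
      + (((Real.sqrt (1-η) : ℂ)*(Real.sqrt (1-η) : ℂ) - 1)*(Real.sqrt (1-p) : ℂ)*(Real.sqrt q : ℂ)*(starRingEnd ℂ) (Complex.exp (Complex.I * (φ₂:ℂ)))) * (ha + hb) + ((Real.sqrt (1-p) : ℂ)*(Real.sqrt q : ℂ)*(starRingEnd ℂ) (Complex.exp (Complex.I * (φ₂:ℂ)))) * hc + (-((Real.sqrt (1-p) : ℂ)*(Real.sqrt q : ℂ)*(starRingEnd ℂ) (Complex.exp (Complex.I * (φ₂:ℂ))))) * hoff
      + ((-((Real.sqrt ((1 - ξ/2)/(1-η)) : ℂ)*(Real.sqrt ((1 - ξ/2)/(1-η)) : ℂ)) - (Real.sqrt ((ξ/2)/(1-η)) : ℂ)*(Real.sqrt ((ξ/2)/(1-η)) : ℂ) + (((1-η)⁻¹ : ℝ) : ℂ))*(Real.sqrt (1-p) : ℂ)*(Real.sqrt q : ℂ)*(starRingEnd ℂ) (Complex.exp (Complex.I * (φ₂:ℂ)))) * hS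
  · -- (1,1)
    linear_combination (norm := (push_cast; ring1)) ((Real.sqrt ((1 - ξ/2)/(1-η)) : ℂ)*(Real.sqrt ((1 - ξ/2)/(1-η)) : ℂ)*(Real.sqrt (1-η) : ℂ)*(Real.sqrt (1-η) : ℂ)*(Real.sqrt q : ℂ)*(Real.sqrt q : ℂ) + (Real.sqrt ((ξ/2)/(1-η)) : ℂ)*(Real.sqrt ((ξ/2)/(1-η)) : ℂ)*(Real.sqrt (1-η) : ℂ)*(Real.sqrt (1-η) : ℂ)*(Real.sqrt q : ℂ)*(Real.sqrt q : ℂ) + (Real.sqrt (η/(1-η)) : ℂ)*(Real.sqrt (η/(1-η)) : ℂ)*(Real.sqrt q : ℂ)*(Real.sqrt q : ℂ)) * hE2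
      + ((Real.sqrt ((1 - ξ/2)/(1-η)) : ℂ)*(Real.sqrt ((1 - ξ/2)/(1-η)) : ℂ)*(Real.sqrt (1-p) : ℂ)*(Real.sqrt (1-p) : ℂ) + (Real.sqrt ((ξ/2)/(1-η)) : ℂ)*(Real.sqrt ((ξ/2)/(1-η)) : ℂ)*(Real.sqrt (1-p) : ℂ)*(Real.sqrt (1-p) : ℂ)) * hGG
      + ((Real.sqrt (1-η) : ℂ)*(Real.sqrt (1-η) : ℂ)*(Real.sqrt q : ℂ)*(Real.sqrt q : ℂ) + (Real.sqrt (1-p) : ℂ)*(Real.sqrt (1-p) : ℂ)) * (ha + hb) + ((Real.sqrt q : ℂ)*(Real.sqrt q : ℂ)) * hc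
      + ((((1 - ξ/2)/(1-η) : ℝ) : ℂ)+(((ξ/2)/(1-η) : ℝ) : ℂ))*(Real.sqrt q : ℂ)*(Real.sqrt q : ℂ)*hS + (((((1 - ξ/2)/(1-η) : ℝ) : ℂ)+(((ξ/2)/(1-η) : ℝ) : ℂ))*((1-η:ℝ):ℂ) + ((η/(1-η) : ℝ) : ℂ))*hB + ((((1 - ξ/2)/(1-η) : ℝ) : ℂ)+(((ξ/2)/(1-η) : ℝ) : ℂ))*hA + hd11
end

section
/- In the swap regime with |c₀| = 1 (i.e., {z_μ} = (1,0,0)), the composition in the previous setting achieves perfect state transfer: if the initial global state encodes the pure qubit state α|0⟩ + β|1⟩ at site 1 (ρ₀₀ = |α|², ρ₁₁ = |β|², ρ₀₁ = αβ̄-type coherence) then after the evolution the reduced state of site 3 is exactly |ψ⟩⟨ψ| with ψ = α|0⟩ + β|1⟩, giving fidelity 1. -/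
open Matrix

set_option maxHeartbeats 2000000 in
/-- in the swap regime with `{z_μ} = (1,0,0)` the QCA achieves
perfect state transfer: if the initial global state encodes the pure qubit
state `α|0⟩ + β|1⟩` at site 1, then after one full step the reduced state of
site 3 (extracted by the 0⊕1-sector partial trace) is exactly `|ψ⟩⟨ψ|`. -/
theorem stmt_16 (α β : ℂ) (hnorm : ‖α‖ ^ 2 + ‖β‖ ^ 2 = 1) :
    let z : Fin 3 → ℂ := fun μ => if μ = 0 then 1 else 0
    let e : Fin 3 → ℂ := fun μ => if μ = 0 then 1 else 0
    let Keven : Fin 3 → Matrix (Fin 4) (Fin 4) ℂ := fun μ =>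
      !![z μ, 0, 0, 0; 0, 0, e μ, 0; 0, e μ, 0, 0; 0, 0, 0, e μ]
    let Kodd : Fin 3 → Matrix (Fin 4) (Fin 4) ℂ := fun μ =>
      !![z μ, 0, 0, 0; 0, e μ, 0, 0; 0, 0, 0, e μ; 0, 0, e μ, 0]
    -- initial pure state α|0⟩ + β|1⟩ (qubit state encoded at site 1)
    let ρ0 : Matrix (Fin 4) (Fin 4) ℂ :=
      !![α * star α, α * star β, 0, 0; β * star α, β * star β, 0, 0;
         0, 0, 0, 0; 0, 0, 0, 0]
    let ρ1 : Matrix (Fin 4) (Fin 4) ℂ :=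
      ∑ ν, Kodd ν * (∑ μ, Keven μ * ρ0 * (Keven μ)ᴴ) * (Kodd ν)ᴴ
    -- reduced state of site 3
    let ρ3 : Matrix (Fin 2) (Fin 2) ℂ :=
      !![ρ1 0 0 + ρ1 1 1 + ρ1 2 2, ρ1 0 3; ρ1 3 0, ρ1 3 3]
    ρ3 = !![α * star α, α * star β; β * star α, β * star β] := by
  intro z e Keven Kodd ρ0 ρ1 ρ3
  have hρ1 : ρ1 = ∑ ν, Kodd ν * (∑ μ, Keven μ * ρ0 * (Keven μ)ᴴ) * (Kodd ν)ᴴ := rfl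
  ext i j
  fin_cases i <;> fin_cases j <;>
    simp [ρ3, hρ1, Kodd, Keven, ρ0, z, e, Matrix.sum_apply, Matrix.mul_apply,
      Fin.sum_univ_succ, Matrix.conjTranspose_apply, Matrix.vecMul, dotProduct, Matrix.vecHead, Matrix.vecTail] <;> ring
end
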